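/- Let W be a Coxeter group, ≡ an essential semilattice congruence on the left weak order of W, and S_≡(w) = w·(π_↓(w))⁻¹ the associated Coxeter stack-sorting operator. If v ≤_L w in the left weak order, then the number of preimages of v under S_≡ is at least the number of preimages of w under S_≡ (as cardinalities: there is an injection from S_≡⁻¹(w) into S_≡⁻¹(v)). Moreover, if w = sv with s a simple generator and ℓ(w) = ℓ(v)+1, the injection is given by u ↦ su. -/

import Mathlib

/-- If `v ≤_L w`, then `|S_≡⁻¹(v)| ≥ |S_≡⁻¹(w)|`: there is an injection from
the preimage set of `w` into that of `v`; moreover if `w = s v` covers `v`, the injection is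
given by `u ↦ s u`. -/
theorem stmt_6 {B W : Type*} [Group W] {M : CoxeterMatrix B} (cs : CoxeterSystem M W)
    (lL : W → W → Prop) (hlL : ∀ x y, lL x y ↔ cs.length (y * x⁻¹) + cs.length x = cs.length y)
    (inf : W → W → W)
    (hinf : ∀ x y, lL (inf x y) x ∧ lL (inf x y) y ∧ ∀ z, lL z x → lL z y → lL z (inf x y))
    (r : W → W → Prop) (hequiv : Equivalence r)
    (hcong : ∀ x1 x2 y1 y2, r x1 x2 → r y1 y2 → r (inf x1 y1) (inf x2 y2))
    (hess : ∀ x, r x 1 → x = 1)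
    (pd : W → W) (hpd : ∀ w, r (pd w) w ∧ ∀ u, r u w → lL (pd w) u)
    (v w : W) :
    (lL v w →
      ∃ f : {u : W // u * (pd u)⁻¹ = w} → {u : W // u * (pd u)⁻¹ = v}, Function.Injective f) ∧
    (∀ i : B, w = cs.simple i * v → cs.length w = cs.length v + 1 →
      ∀ u : W, u * (pd u)⁻¹ = w → (cs.simple i * u) * (pd (cs.simple i * u))⁻¹ = v) := by
  -- `lL` is reflexive and antisymmetric
  have hrefl : ∀ x, lL x x := by
    intro x
    rw [hlL]
    simp
  have hanti : ∀ x y, lL x y → lL y x → x = y := by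
    intro x y hxy hyx
    rw [hlL] at hxy hyx
    have h0 : cs.length (y * x⁻¹) = 0 := by omega
    have h1 : y * x⁻¹ = 1 := cs.length_eq_zero_iff.mp h0
    exact (mul_inv_eq_one.mp h1).symm
  -- Key lemma: the cover case
  have key : ∀ (i : B) (v w : W), w = cs.simple i * v → cs.length w = cs.length v + 1 →
      ∀ u : W, u * (pd u)⁻¹ = w → (cs.simple i * u) * (pd (cs.simple i * u))⁻¹ = v := by
    intro i v w hw hlen u hu
    obtain ⟨hru, hmin⟩ := hpd u
    have hlLpu : lL (pd u) u := hmin u (hequiv.refl u)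
    have hpu : cs.length w + cs.length (pd u) = cs.length u := by
      have h := (hlL (pd u) u).mp hlLpu
      rwa [hu] at h
    have hsu_eq : (cs.simple i * u) * (pd u)⁻¹ = v := by
      rw [mul_assoc, hu, hw, cs.simple_mul_simple_cancel_left]
    have hvp : cs.simple i * u = v * pd u := by
      have h : (cs.simple i * u) * (pd u)⁻¹ * pd u = v * pd u := by rw [hsu_eq]
      simpa using h
    have hlen_su : cs.length (cs.simple i * u) = cs.length v + cs.length (pd u) := by
      have h1 : cs.length (cs.simple i * u) ≤ cs.length v + cs.length (pd u) := by
        rw [hvp]; exact cs.length_mul_le v (pd u)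
      have h2 : cs.length u ≤ 1 + cs.length (cs.simple i * u) := by
        have h := cs.length_mul_le (cs.simple i) (cs.simple i * u)
        rwa [cs.simple_mul_simple_cancel_left, cs.length_simple] at h
      omega
    have hlLp_su : lL (pd u) (cs.simple i * u) := by
      rw [hlL, hsu_eq, hlen_su]
    have hlL_su_u : lL (cs.simple i * u) u := by
      rw [hlL]
      have h : u * (cs.simple i * u)⁻¹ = cs.simple i := by
        rw [mul_inv_rev, cs.inv_simple, ← mul_assoc, mul_inv_cancel, one_mul]
      rw [h, cs.length_simple, hlen_su]
      omega
    have hinf1 : inf (cs.simple i * u) u = cs.simple i * u :=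
      hanti _ _ (hinf _ _).1 ((hinf _ _).2.2 _ (hrefl _) hlL_su_u)
    have hinf2 : inf (cs.simple i * u) (pd u) = pd u :=
      hanti _ _ (hinf _ _).2.1 ((hinf _ _).2.2 _ hlLp_su (hrefl _))
    have hr : r (cs.simple i * u) (pd u) := by
      have h := hcong (cs.simple i * u) (cs.simple i * u) u (pd u)
        (hequiv.refl _) (hequiv.symm hru)
      rwa [hinf1, hinf2] at h
    obtain ⟨hrsu, hminsu⟩ := hpd (cs.simple i * u)
    have e1 : lL (pd (cs.simple i * u)) (pd u) :=
      hminsu _ (hequiv.symm hr)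
    have e2 : lL (pd u) (pd (cs.simple i * u)) :=
      hmin _ (hequiv.trans hrsu (hequiv.trans hr hru))
    rw [hanti _ _ e1 e2, hsu_eq]
  refine ⟨?_, fun i hw hl u hu => key i v w hw hl u hu⟩
  -- Part 1: induction on ℓ(w v⁻¹)
  have main : ∀ n (w : W), cs.length (w * v⁻¹) = n → lL v w →
      ∃ f : {u : W // u * (pd u)⁻¹ = w} → {u : W // u * (pd u)⁻¹ = v},
        Function.Injective f := by
    intro n
    induction n with
    | zero =>
      intro w hn _
      have h : w * v⁻¹ = 1 := cs.length_eq_zero_iff.mp hn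
      have hwv : w = v := mul_inv_eq_one.mp h
      subst hwv
      exact ⟨id, Function.injective_id⟩
    | succ n ih =>
      intro w hn hvw
      obtain ⟨ω, hω, hcw⟩ := cs.exists_reduced_word (w * v⁻¹)
      replace hω : ω.length = n + 1 := by rw [← hn, hcw]; exact hω.eq.symm
      match ω, hω with
      | i :: ω', hω =>
        have hω' : ω'.length = n := by simpa using hω
        have hc' : cs.length (cs.wordProd ω') ≤ n := hω' ▸ cs.length_wordProd_le ω'
        rw [cs.wordProd_cons] at hcw
        have hw_eq : w = cs.simple i * (cs.wordProd ω' * v) := by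
          have h : w * v⁻¹ * v = cs.simple i * cs.wordProd ω' * v := by rw [hcw]
          simpa [mul_assoc] using h
        set w' := cs.wordProd ω' * v with hw'
        have hvw_len : cs.length (w * v⁻¹) + cs.length v = cs.length w :=
          (hlL v w).mp hvw
        have hlw'_le : cs.length w' ≤ n + cs.length v :=
          le_trans (cs.length_mul_le _ _) (by omega)
        have hlw_le : cs.length w ≤ 1 + cs.length w' := by
          have h := cs.length_mul_le (cs.simple i) w'
          rw [← hw_eq, cs.length_simple] at h
          exact h
        have hlw' : cs.length w' = n + cs.length v := by omega
        have hw'v : w' * v⁻¹ = cs.wordProd ω' := by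
          rw [hw', mul_assoc, mul_inv_cancel, mul_one]
        have hc'n : cs.length (cs.wordProd ω') = n := by
          have h : cs.length w' ≤ cs.length (cs.wordProd ω') + cs.length v :=
            cs.length_mul_le _ _
          omega
        have hvw' : lL v w' := by
          rw [hlL, hw'v, hc'n, hlw']
        obtain ⟨f', hf'⟩ := ih w' (by rw [hw'v]; exact hc'n) hvw'
        have hcov : cs.length w = cs.length w' + 1 := by omega
        refine ⟨fun u => f' ⟨cs.simple i * u.1, key i w' w hw_eq hcov u.1 u.2⟩, ?_⟩
        intro a b hab
        have h := hf' hab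
        have h2 : cs.simple i * a.1 = cs.simple i * b.1 := congrArg Subtype.val h
        exact Subtype.ext (mul_left_cancel h2)
  exact fun hvw => main (cs.length (w * v⁻¹)) w rfl hvw
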